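/- For every q ∈ [0,1], the threshold profile p^{i_lb(q)} (in which agents 1,…,i_lb(q) move with probability 1 and agents i_lb(q)+1,…,N stay with probability 1) is a Bayes–Nash equilibrium at belief q. -/
import Mathlib


open Finset

noncomputable section

open scoped Classical

/-- Agent `i`'s expected utility for moving, when the other agents `{1,…,N}∖{i}`
independently move with probabilities `p j` and the common belief that θ = 1 is `q`. -/
def moveUtil (N : ℕ) (F r : ℕ → ℝ) (q : ℝ) (p : ℕ → ℝ) (i : ℕ) : ℝ :=
  q * ∑ T ∈ ((Icc 1 N).erase i).powerset,
      (∏ j ∈ T, p j) * (∏ j ∈ ((Icc 1 N).erase i) \ T, (1 - p j)) * F (T.card + 1)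
    - r i

/-- A Bayes–Nash equilibrium at common belief `q`: a profile `p ∈ [0,1]^N` such that
any agent with strictly positive (resp. negative) utility for moving moves (stays)
with probability one. -/
def IsBNE (N : ℕ) (F r : ℕ → ℝ) (q : ℝ) (p : ℕ → ℝ) : Prop :=
  (∀ i ∈ Icc 1 N, 0 ≤ p i ∧ p i ≤ 1) ∧
  ∀ i ∈ Icc 1 N,
    (0 < moveUtil N F r q p i → p i = 1) ∧
    (moveUtil N F r q p i < 0 → p i = 0)

/-- `i_ub(q) = max{ i ∈ {0,…,N} : q·F(i) − r(i) ≥ 0 }` (the junk value 0 if empty). -/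
def iUB (N : ℕ) (F r : ℕ → ℝ) (q : ℝ) : ℕ :=
  ((range (N + 1)).filter (fun i => 0 ≤ q * F i - r i)).sup id

/-- `i_lb(q) = max{ i ∈ {0,…,N} : q·F(i) − r(i) > 0 }`, with value 0 if empty. -/
def iLB (N : ℕ) (F r : ℕ → ℝ) (q : ℝ) : ℕ :=
  ((range (N + 1)).filter (fun i => 0 < q * F i - r i)).sup id

lemma sum_indicator_aux (F : ℕ → ℝ) (k : ℕ) (s : Finset ℕ) :
    ∑ T ∈ s.powerset,
      (∏ j ∈ T, (if j ≤ k then (1:ℝ) else 0)) *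
      (∏ j ∈ s \ T, (1 - (if j ≤ k then (1:ℝ) else 0))) * F (T.card + 1)
    = F ((s.filter (fun j => j ≤ k)).card + 1) := by
  rw [Finset.sum_eq_single (s.filter (fun j => j ≤ k))]
  · rw [Finset.prod_eq_one, Finset.prod_eq_one, one_mul, one_mul]
    · intro j hj
      simp only [mem_sdiff, mem_filter] at hj
      have : ¬ j ≤ k := fun h => hj.2 ⟨hj.1, h⟩
      simp [this]
    · intro j hj
      simp [(mem_filter.mp hj).2]
  · intro T hT hne
    by_cases h : ∃ j ∈ T, ¬ j ≤ k
    · obtain ⟨j, hj, hjk⟩ := h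
      rw [Finset.prod_eq_zero hj (by simp [hjk]), zero_mul, zero_mul]
    · push_neg at h
      have hTs := Finset.mem_powerset.mp hT
      have hTA : T ⊆ s.filter (fun j => j ≤ k) := fun j hj =>
        mem_filter.mpr ⟨hTs hj, h j hj⟩
      obtain ⟨j, hjA, hjT⟩ := Finset.exists_of_ssubset (hTA.ssubset_of_ne hne)
      have hjs : j ∈ s \ T := mem_sdiff.mpr ⟨(mem_filter.mp hjA).1, hjT⟩
      rw [Finset.prod_eq_zero hjs (by simp [(mem_filter.mp hjA).2]), mul_zero, zero_mul]
  · intro h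
    exact absurd (Finset.mem_powerset.mpr (Finset.filter_subset _ _)) h

/-- for every belief `q`, the pure threshold profile in which agents
`1,…,i_lb(q)` move and agents `i_lb(q)+1,…,N` stay is a Bayes–Nash equilibrium. -/
theorem stmt12 (N : ℕ) (hN : 1 ≤ N) (F r : ℕ → ℝ)
    (hFnn : ∀ n, n ≤ N → 0 ≤ F n) (hF01 : F 0 = F 1)
    (hFmono : ∀ n, n + 1 ≤ N → F (n + 1) ≤ F n)
    (hr0 : r 0 = 0) (hrnn : ∀ i, i ≤ N → 0 ≤ r i)
    (hrmono : ∀ i, i + 1 ≤ N → r i ≤ r (i + 1))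
    (q : ℝ) (hq0 : 0 ≤ q) (hq1 : q ≤ 1) :
    IsBNE N F r q (fun i => if i ≤ iLB N F r q then 1 else 0) := by
  set k := iLB N F r q with hk
  have hkN : k ≤ N := by
    apply Finset.sup_le
    intro b hb
    have := Finset.mem_range.mp (Finset.mem_filter.mp hb).1
    simpa using Nat.lt_succ_iff.mp this
  have hkpos : k ≠ 0 → 0 < q * F k - r k := by
    intro h0
    have hne : ((range (N+1)).filter (fun i => 0 < q * F i - r i)).Nonempty := by
      by_contra h
      rw [Finset.not_nonempty_iff_eq_empty] at h
      rw [hk, iLB, h] at h0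
      simp at h0
    obtain ⟨b, hb, hbeq⟩ := Finset.exists_mem_eq_sup _ hne id
    have : k = b := by rw [hk, iLB, hbeq]; rfl
    rw [this]
    exact (Finset.mem_filter.mp hb).2
  have hnotmem : k + 1 ≤ N → q * F (k+1) - r (k+1) ≤ 0 := by
    intro hle
    by_contra h
    push_neg at h
    have hmem : k + 1 ∈ (range (N+1)).filter (fun i => 0 < q * F i - r i) :=
      Finset.mem_filter.mpr ⟨Finset.mem_range.mpr (by omega), h⟩
    have := Finset.le_sup (f := id) hmem
    rw [← iLB, ← hk] at this
    simp only [id] at this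
    omega
  have hrle : ∀ a b, a ≤ b → b ≤ N → r a ≤ r b := by
    intro a b hab hbN
    induction b with
    | zero => simp [Nat.le_zero.mp hab]
    | succ n ih =>
      rcases Nat.lt_or_ge a (n+1) with h | h
      · exact (ih (by omega) (by omega)).trans (hrmono n hbN)
      · have : a = n + 1 := le_antisymm hab h
        simp [this]
  have hutil : ∀ i, moveUtil N F r q (fun i => if i ≤ k then 1 else 0) i =
      q * F ((((Icc 1 N).erase i).filter (fun j => j ≤ k)).card + 1) - r i := by
    intro i
    rw [moveUtil, sum_indicator_aux]
  constructor
  · intro i _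
    dsimp only
    split_ifs <;> norm_num
  · intro i hi
    rw [Finset.mem_Icc] at hi
    by_cases hik : i ≤ k
    · -- agent moves; utility = q F k - r i > 0
      have hkne : k ≠ 0 := by omega
      have hset : ((Icc 1 N).erase i).filter (fun j => j ≤ k) = (Icc 1 k).erase i := by
        ext j
        simp only [mem_filter, mem_erase, mem_Icc]
        omega
      have hcard : (((Icc 1 N).erase i).filter (fun j => j ≤ k)).card + 1 = k := by
        rw [hset, Finset.card_erase_of_mem (Finset.mem_Icc.mpr ⟨hi.1, hik⟩), Nat.card_Icc]
        omega
      have hupos : 0 < moveUtil N F r q (fun i => if i ≤ k then 1 else 0) i := by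
        rw [hutil, hcard]
        have h1 := hkpos hkne
        have h2 := hrle i k hik hkN
        linarith
      refine ⟨fun _ => by simp [hik], fun h => absurd h (by linarith)⟩
    · -- agent stays; utility = q F (k+1) - r i ≤ 0
      push_neg at hik
      have hset : ((Icc 1 N).erase i).filter (fun j => j ≤ k) = Icc 1 k := by
        ext j
        simp only [mem_filter, mem_erase, mem_Icc]
        omega
      have hcard : (((Icc 1 N).erase i).filter (fun j => j ≤ k)).card + 1 = k + 1 := by
        rw [hset, Nat.card_Icc]; omega
      have huneg : moveUtil N F r q (fun i => if i ≤ k then 1 else 0) i ≤ 0 := by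
        rw [hutil, hcard]
        have h1 := hnotmem (by omega)
        have h2 := hrle (k+1) i (by omega) hi.2
        linarith
      refine ⟨fun h => absurd h (by linarith), fun _ => by simp [Nat.not_le.mpr hik]⟩

end
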